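/- In the algebra Z_n, for each 1 ≤ i ≤ n and all m, p ≥ 0, the element w_i^m z_i^p can be written as ∑_{k=0}^{min(m,p)} d_k z_i^{p−k} w_i^{m−k} Q_i^k for some coefficients d_k ∈ ℂ[q²]. -/

import Mathlib

noncomputable section

/-- Free algebra on generators `z_1,…,z_n, w_1,…,w_n`. -/
abbrev FreeZW (n : ℕ) := FreeAlgebra ℂ (Fin n ⊕ Fin n)

/-- Generator `z_i`. -/
def zGen (n : ℕ) (i : Fin n) : FreeZW n := FreeAlgebra.ι ℂ (Sum.inl i)

/-- Generator `w_i`. -/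
def wGen (n : ℕ) (i : Fin n) : FreeZW n := FreeAlgebra.ι ℂ (Sum.inr i)

/-- The defining relations of the quantized algebra of polynomials on `ℂ^n`:
`z_i z_j = q z_j z_i` (i<j), `w_j w_i = q w_i w_j` (i<j), `w_i z_j = q z_j w_i` (i≠j),
`w_i z_i = z_i w_i + (1-q²) ∑_{k<i} z_k w_k`. -/
inductive ZRel (n : ℕ) (q : ℝ) : FreeZW n → FreeZW n → Prop
  | zz {i j : Fin n} (h : i < j) :
      ZRel n q (zGen n i * zGen n j) ((q : ℂ) • (zGen n j * zGen n i))
  | ww {i j : Fin n} (h : i < j) :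
      ZRel n q (wGen n j * wGen n i) ((q : ℂ) • (wGen n i * wGen n j))
  | wz {i j : Fin n} (h : i ≠ j) :
      ZRel n q (wGen n i * zGen n j) ((q : ℂ) • (zGen n j * wGen n i))
  | wzDiag (i : Fin n) :
      ZRel n q (wGen n i * zGen n i)
        (zGen n i * wGen n i +
          (1 - (q : ℂ) ^ 2) • ∑ k ∈ Finset.univ.filter (· < i), zGen n k * wGen n k)

/-- The quantized algebra `Z_n` of polynomials on `ℂ^n`. -/
abbrev ZAlg (n : ℕ) (q : ℝ) := RingQuot (ZRel n q)

/-- The generator `z_i` of `Z_n`. -/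
def zEl (n : ℕ) (q : ℝ) (i : Fin n) : ZAlg n q :=
  RingQuot.mkAlgHom ℂ (ZRel n q) (zGen n i)

/-- The generator `w_i` of `Z_n`. -/
def wEl (n : ℕ) (q : ℝ) (i : Fin n) : ZAlg n q :=
  RingQuot.mkAlgHom ℂ (ZRel n q) (wGen n i)

/-- The monomial `z^λ w^μ = z_1^{λ_1} ⋯ z_n^{λ_n} w_n^{μ_n} ⋯ w_1^{μ_1}` in `Z_n`. -/
def zwMono (n : ℕ) (q : ℝ) (lam mu : Fin n → ℕ) : ZAlg n q :=
  (List.ofFn fun i : Fin n => zEl n q i ^ lam i).prod *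
    (List.ofFn fun i : Fin n => wEl n q i.rev ^ mu i.rev).prod

/-- The central element `Q_i = ∑_{k=1}^{i} z_k w_k` (here `i : ℕ`, summing over the first
`i` indices; `Q_0 = 0`). -/
def QEl (n : ℕ) (q : ℝ) (i : ℕ) : ZAlg n q :=
  ∑ k ∈ Finset.univ.filter (fun k : Fin n => (k : ℕ) < i), zEl n q k * wEl n q k

section MyAux
variable (n : ℕ) (q : ℝ) (i : Fin n)

/-- partial sum `∑_{k<i} z_k w_k` -/
def myQprev : ZAlg n q :=
  ∑ k ∈ Finset.univ.filter (· < i), zEl n q k * wEl n q k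

lemma my_rel {a b : FreeZW n} (h : ZRel n q a b) :
    RingQuot.mkAlgHom ℂ (ZRel n q) a = RingQuot.mkAlgHom ℂ (ZRel n q) b :=
  RingQuot.mkAlgHom_rel ℂ h

lemma my_zz {k : Fin n} (h : k < i) :
    zEl n q k * zEl n q i = (q : ℂ) • (zEl n q i * zEl n q k) := by
  have := my_rel n q (ZRel.zz (q := q) h)
  simp only [map_mul, map_smul] at this
  exact this

lemma my_ww {k : Fin n} (h : k < i) :
    wEl n q i * wEl n q k = (q : ℂ) • (wEl n q k * wEl n q i) := by
  have := my_rel n q (ZRel.ww (q := q) h)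
  simp only [map_mul, map_smul] at this
  exact this

lemma my_wz {k : Fin n} (h : (i : Fin n) ≠ k) :
    wEl n q i * zEl n q k = (q : ℂ) • (zEl n q k * wEl n q i) := by
  have := my_rel n q (ZRel.wz (q := q) h)
  simp only [map_mul, map_smul] at this
  exact this

lemma my_wzDiag :
    wEl n q i * zEl n q i =
      zEl n q i * wEl n q i + (1 - (q : ℂ) ^ 2) • myQprev n q i := by
  have := my_rel n q (ZRel.wzDiag (q := q) i)
  simpa [zEl, wEl, myQprev, map_mul, map_add, map_smul, map_sum] using this

lemma my_Qprev_z :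
    myQprev n q i * zEl n q i = ((q : ℂ) ^ 2) • (zEl n q i * myQprev n q i) := by
  rw [myQprev, Finset.sum_mul, Finset.mul_sum, Finset.smul_sum]
  refine Finset.sum_congr rfl fun k hk => ?_
  have hki : k < i := (Finset.mem_filter.1 hk).2
  calc zEl n q k * wEl n q k * zEl n q i
      = zEl n q k * (wEl n q k * zEl n q i) := by rw [mul_assoc]
    _ = zEl n q k * ((q : ℂ) • (zEl n q i * wEl n q k)) := by
        rw [my_wz n q k (k := i) hki.ne]
    _ = (q : ℂ) • (zEl n q k * zEl n q i * wEl n q k) := by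
        rw [mul_smul_comm, mul_assoc]
    _ = (q : ℂ) • (((q : ℂ) • (zEl n q i * zEl n q k)) * wEl n q k) := by
        rw [my_zz n q i hki]
    _ = ((q : ℂ) ^ 2) • (zEl n q i * (zEl n q k * wEl n q k)) := by
        rw [smul_mul_assoc, smul_smul, mul_assoc, sq]
  -- note: my_wz arg order
lemma my_w_Qprev :
    wEl n q i * myQprev n q i = ((q : ℂ) ^ 2) • (myQprev n q i * wEl n q i) := by
  rw [myQprev, Finset.mul_sum, Finset.sum_mul, Finset.smul_sum]
  refine Finset.sum_congr rfl fun k hk => ?_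
  have hki : k < i := (Finset.mem_filter.1 hk).2
  calc wEl n q i * (zEl n q k * wEl n q k)
      = (wEl n q i * zEl n q k) * wEl n q k := by rw [mul_assoc]
    _ = ((q : ℂ) • (zEl n q k * wEl n q i)) * wEl n q k := by
        rw [my_wz n q i (k := k) hki.ne']
    _ = (q : ℂ) • (zEl n q k * (wEl n q i * wEl n q k)) := by
        rw [smul_mul_assoc, mul_assoc]
    _ = (q : ℂ) • (zEl n q k * ((q : ℂ) • (wEl n q k * wEl n q i))) := by
        rw [my_ww n q i hki]
    _ = ((q : ℂ) ^ 2) • (zEl n q k * wEl n q k * wEl n q i) := by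
        rw [mul_smul_comm, smul_smul, mul_assoc, sq]

lemma my_Q_eq :
    QEl n q ((i : ℕ) + 1) = myQprev n q i + zEl n q i * wEl n q i := by
  rw [QEl, myQprev]
  have hset : Finset.univ.filter (fun k : Fin n => (k : ℕ) < (i : ℕ) + 1)
      = insert i (Finset.univ.filter (· < i)) := by
    ext k
    simp only [Finset.mem_filter, Finset.mem_univ, true_and, Finset.mem_insert,
      Fin.lt_def, Fin.ext_iff]
    omega
  rw [hset, Finset.sum_insert (by simp [Fin.lt_irrefl])]
  exact add_comm _ _

lemma my_key :
    wEl n q i * zEl n q i =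
      ((q : ℂ) ^ 2) • (zEl n q i * wEl n q i)
        + (1 - (q : ℂ) ^ 2) • QEl n q ((i : ℕ) + 1) := by
  rw [my_wzDiag, my_Q_eq, smul_add]
  module

lemma my_Qz :
    QEl n q ((i : ℕ) + 1) * zEl n q i = zEl n q i * QEl n q ((i : ℕ) + 1) := by
  rw [my_Q_eq, add_mul, mul_add, my_Qprev_z,
    mul_assoc (zEl n q i) (wEl n q i) (zEl n q i),
    my_wzDiag, mul_add, mul_smul_comm]
  module

lemma my_Qw :
    wEl n q i * QEl n q ((i : ℕ) + 1) = QEl n q ((i : ℕ) + 1) * wEl n q i := by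
  rw [my_Q_eq, mul_add, add_mul, my_w_Qprev,
    ← mul_assoc (wEl n q i) (zEl n q i) (wEl n q i),
    my_wzDiag, add_mul, smul_mul_assoc]
  module

end MyAux

/-- In `Z_n`: `w_i^m z_i^p = ∑_{k=0}^{min(m,p)} d_k z_i^{p−k} w_i^{m−k} Q_i^k` for
coefficients `d_k ∈ ℂ[q²]` (the paper's `Q_i` is `QEl n q ((i : ℕ)+1)`). -/
theorem wPow_mul_zPow_expansion (n : ℕ) (q : ℝ) (h0 : 0 < q) (h1 : q < 1)
    (i : Fin n) (m p : ℕ) :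
    ∃ d : ℕ → Polynomial ℂ,
      wEl n q i ^ m * zEl n q i ^ p =
        ∑ k ∈ Finset.range (min m p + 1),
          (d k).eval ((q : ℂ) ^ 2) •
            (zEl n q i ^ (p - k) * wEl n q i ^ (m - k) * QEl n q ((i : ℕ) + 1) ^ k) := by
  set z := zEl n q i with hz
  set w := wEl n q i with hw
  set Q := QEl n q ((i : ℕ) + 1) with hQ
  -- L1
  have L1 : ∀ M : ℕ, ∃ a b : ℂ,
      w ^ (M + 1) * z = a • (z * w ^ (M + 1)) + b • (Q * w ^ M) := by
    intro M
    induction M with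
    | zero =>
      exact ⟨(q : ℂ) ^ 2, 1 - (q : ℂ) ^ 2, by
        simpa [pow_one] using my_key n q i⟩
    | succ M ih =>
      obtain ⟨a, b, hab⟩ := ih
      refine ⟨a * (q : ℂ) ^ 2, a * (1 - (q : ℂ) ^ 2) + b, ?_⟩
      calc w ^ (M + 2) * z = w * (w ^ (M + 1) * z) := by
            rw [pow_succ']; rw [mul_assoc]
        _ = w * (a • (z * w ^ (M + 1)) + b • (Q * w ^ M)) := by rw [hab]
        _ = a • (w * z * w ^ (M + 1)) + b • ((w * Q) * w ^ M) := by
            rw [mul_add, mul_smul_comm, mul_smul_comm, ← mul_assoc, ← mul_assoc]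
        _ = a • ((((q:ℂ)^2) • (z * w) + (1 - (q:ℂ)^2) • Q) * w ^ (M + 1))
              + b • (Q * w ^ (M + 1)) := by
            rw [my_key n q i, my_Qw n q i, mul_assoc, ← pow_succ']
        _ = (a * (q : ℂ) ^ 2) • (z * w ^ (M + 2))
              + (a * (1 - (q : ℂ) ^ 2) + b) • (Q * w ^ (M + 1)) := by
            rw [add_mul, smul_mul_assoc, smul_mul_assoc, mul_assoc, ← pow_succ']
            module
  -- commutation of Q with powers
  have hQz : Commute Q z := (my_Qz n q i)
  have hQw : Commute Q w := (my_Qw n q i).symm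
  have hQT : ∀ a b k : ℕ, Q * (z ^ a * w ^ b * Q ^ k) = z ^ a * w ^ b * Q ^ (k + 1) := by
    intro a b k
    have hc : Commute Q (z ^ a * w ^ b * Q ^ k) :=
      ((hQz.pow_right a).mul_right (hQw.pow_right b)).mul_right
        ((Commute.refl Q).pow_right k)
    rw [hc.eq, mul_assoc, ← pow_succ]
  -- main claim with complex coefficients
  suffices H : ∀ p m : ℕ, ∃ c : ℕ → ℂ,
      w ^ m * z ^ p =
        ∑ k ∈ Finset.range (min m p + 1),
          c k • (z ^ (p - k) * w ^ (m - k) * Q ^ k) by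
    obtain ⟨c, hc⟩ := H p m
    exact ⟨fun k => Polynomial.C (c k), by simp only [Polynomial.eval_C]; exact hc⟩
  clear h0 h1
  intro p
  induction p with
  | zero =>
    intro m
    refine ⟨fun _ => 1, by simp⟩
  | succ p ih =>
    intro m
    match m with
    | 0 => exact ⟨fun _ => 1, by simp⟩
    | M + 1 =>
      obtain ⟨a, b, hab⟩ := L1 M
      obtain ⟨c1, h1⟩ := ih (M + 1)
      obtain ⟨c2, h2⟩ := ih M
      set N1 := min (M + 1) p + 1 with hN1
      set N2 := min M p + 1 with hN2
      have hmin : min (M + 1) (p + 1) = min M p + 1 := by omega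
      have hN1le : N1 ≤ min M p + 2 := by omega
      refine ⟨fun k => (if k < N1 then a * c1 k else 0)
        + (if k = 0 then 0 else b * c2 (k - 1)), ?_⟩
      have step1 : w ^ (M + 1) * z ^ (p + 1)
          = a • (z * (w ^ (M + 1) * z ^ p)) + b • (Q * (w ^ M * z ^ p)) := by
        calc w ^ (M + 1) * z ^ (p + 1) = (w ^ (M + 1) * z) * z ^ p := by
              rw [pow_succ' z, ← mul_assoc]
          _ = (a • (z * w ^ (M + 1)) + b • (Q * w ^ M)) * z ^ p := by rw [hab]
          _ = a • (z * (w ^ (M + 1) * z ^ p)) + b • (Q * (w ^ M * z ^ p)) := by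
              rw [add_mul, smul_mul_assoc, smul_mul_assoc, mul_assoc, mul_assoc]
      rw [step1, h1, h2, Finset.mul_sum, Finset.mul_sum]
      have e1 : ∀ k ∈ Finset.range N1,
          z * (c1 k • (z ^ (p - k) * w ^ (M + 1 - k) * Q ^ k))
            = c1 k • (z ^ (p + 1 - k) * w ^ (M + 1 - k) * Q ^ k) := by
        intro k hk
        have hkp : k ≤ p := by
          have := Finset.mem_range.1 hk; omega
        rw [mul_smul_comm, ← mul_assoc, ← mul_assoc, ← pow_succ',
          Nat.succ_sub hkp]
      have e2 : ∀ k ∈ Finset.range N2,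
          Q * (c2 k • (z ^ (p - k) * w ^ (M - k) * Q ^ k))
            = c2 k • (z ^ (p - k) * w ^ (M - k) * Q ^ (k + 1)) := by
        intro k hk
        rw [mul_smul_comm, hQT]
      rw [Finset.sum_congr rfl e1, Finset.sum_congr rfl e2, hmin]
      rw [show min M p + 1 + 1 = min M p + 2 from rfl]
      -- split target sum
      have split : ∀ k : ℕ,
          ((if k < N1 then a * c1 k else 0) + (if k = 0 then 0 else b * c2 (k - 1)))
              • (z ^ (p + 1 - k) * w ^ (M + 1 - k) * Q ^ k)
          = (if k < N1 then a * c1 k else 0) • (z ^ (p + 1 - k) * w ^ (M + 1 - k) * Q ^ k)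
            + (if k = 0 then 0 else b * c2 (k - 1))
              • (z ^ (p + 1 - k) * w ^ (M + 1 - k) * Q ^ k) := fun k => add_smul _ _ _
      rw [Finset.sum_congr rfl fun k _ => split k, Finset.sum_add_distrib]
      congr 1
      · -- first piece
        rw [Finset.smul_sum]
        rw [← Finset.sum_subset (Finset.range_subset_range.2 hN1le)
          (fun k _ hk => by
            rw [if_neg (fun h => hk (Finset.mem_range.2 h)), zero_smul])]
        refine Finset.sum_congr rfl fun k hk => ?_
        rw [if_pos (Finset.mem_range.1 hk), mul_smul]
      · -- second piece
        rw [Finset.smul_sum]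
        symm
        rw [Finset.sum_range_succ']
        simp only [if_pos rfl, if_true, zero_smul, add_zero]
        refine Finset.sum_congr rfl fun k hk => ?_
        rw [if_neg (Nat.succ_ne_zero k), Nat.add_sub_cancel, Nat.succ_sub_succ,
          Nat.succ_sub_succ, mul_smul]


end
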